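/- The sequence of fake degrees b_{λ,i} is not always unimodal: there exists a partition λ and indices i < j < k with b_{λ,i} > b_{λ,j} and b_{λ,j} < b_{λ,k} with b_{λ,j} between nonzero values. -/

import Mathlib

open Finset

/-- `T` is a standard Young tableau of shape `μ` (values `0, …, μ.card − 1`):
a bijective filling of the cells of `μ`, strictly increasing along rows and columns,
normalized to be `0` outside `μ`. -/
def IsSYT (μ : YoungDiagram) (T : ℕ × ℕ → ℕ) : Prop :=
  Set.BijOn T ↑μ.cells (Set.Iio μ.card) ∧
  (∀ c ∈ μ.cells, ∀ c' ∈ μ.cells, c.1 = c'.1 → c.2 < c'.2 → T c < T c') ∧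
  (∀ c ∈ μ.cells, ∀ c' ∈ μ.cells, c.2 = c'.2 → c.1 < c'.1 → T c < T c') ∧
  (∀ c, c ∉ μ.cells → T c = 0)

/-- The row index of the cell of `μ` containing the value `v` in the filling `T`. -/
def rowOfValue (μ : YoungDiagram) (T : ℕ × ℕ → ℕ) (v : ℕ) : ℕ :=
  (μ.cells.filter fun c => T c = v).sup Prod.fst

/-- The major index of the tableau `T`: the sum of the (1-based) entries `j` such that
`j + 1` lies in a strictly lower row than `j`.  With our 0-based values `v`, the value
`v` contributes `v + 1` when `v + 1` lies in a lower row than `v`. -/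
def majT (μ : YoungDiagram) (T : ℕ × ℕ → ℕ) : ℕ :=
  ∑ v ∈ Finset.range (μ.card - 1),
    if rowOfValue μ T v < rowOfValue μ T (v + 1) then v + 1 else 0

/-- The fake degree `b_{λ,i}`: the number of standard Young tableaux of shape `λ`
with major index `i`. -/
noncomputable def fakeDeg (μ : YoungDiagram) (i : ℕ) : ℕ :=
  Set.ncard {T : ℕ × ℕ → ℕ | IsSYT μ T ∧ majT μ T = i}

/-- `f^λ`: the number of standard Young tableaux of shape `λ`. -/
noncomputable def sytCount (μ : YoungDiagram) : ℕ :=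
  Set.ncard {T : ℕ × ℕ → ℕ | IsSYT μ T}

/-- The Young diagram of a partition of `n`. -/
def shapeOf {n : ℕ} (p : Nat.Partition n) : YoungDiagram :=
  YoungDiagram.ofRowLens (p.parts.sort (· ≥ ·)) (List.Pairwise.sortedGE (p.parts.pairwise_sort _))

def μ0 : YoungDiagram := YoungDiagram.ofRowLens [2,2] (by decide)
def T1 : ℕ × ℕ → ℕ := fun x =>
  if x = (0,0) then 0 else if x = (0,1) then 1 else if x = (1,0) then 2 else
  if x = (1,1) then 3 else 0
def T2 : ℕ × ℕ → ℕ := fun x =>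
  if x = (0,0) then 0 else if x = (0,1) then 2 else if x = (1,0) then 1 else
  if x = (1,1) then 3 else 0

lemma cells0 : μ0.cells = {(0,0),(0,1),(1,0),(1,1)} := by decide
lemma card0 : μ0.card = 4 := by decide
lemma maj1 : majT μ0 T1 = 2 := by decide
lemma maj2 : majT μ0 T2 = 4 := by decide

lemma isSYT1 : IsSYT μ0 T1 := by
  refine ⟨⟨?_, ?_, ?_⟩, ?_, ?_, ?_⟩
  · intro x hx
    simp only [Finset.coe_insert, cells0, Set.mem_insert_iff, Finset.coe_singleton,
      Set.mem_singleton_iff] at hx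
    rcases hx with h|h|h|h <;> subst h <;> simp [-Prod.mk_zero_zero, -Prod.mk_one_one, T1, card0]
  · intro x hx y hy h
    simp only [Finset.coe_insert, cells0, Set.mem_insert_iff, Finset.coe_singleton,
      Set.mem_singleton_iff] at hx hy
    rcases hx with h1|h1|h1|h1 <;> rcases hy with h2|h2|h2|h2 <;> subst h1 <;> subst h2 <;>
      simp_all [-Prod.mk_zero_zero, -Prod.mk_one_one, T1]
  · intro v hv
    simp only [Set.mem_Iio, card0] at hv
    interval_cases v
    · exact ⟨(0,0), by simp [cells0], rfl⟩
    · exact ⟨(0,1), by simp [cells0], rfl⟩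
    · exact ⟨(1,0), by simp [cells0], rfl⟩
    · exact ⟨(1,1), by simp [cells0], rfl⟩
  · decide
  · decide
  · intro c hc
    rw [cells0] at hc
    simp only [Finset.mem_insert, Finset.mem_singleton, not_or] at hc
    obtain ⟨h1,h2,h3,h4⟩ := hc
    simp [-Prod.mk_zero_zero, -Prod.mk_one_one, T1, h1, h2, h3, h4]

lemma isSYT2 : IsSYT μ0 T2 := by
  refine ⟨⟨?_, ?_, ?_⟩, ?_, ?_, ?_⟩
  · intro x hx
    simp only [Finset.coe_insert, cells0, Set.mem_insert_iff, Finset.coe_singleton,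
      Set.mem_singleton_iff] at hx
    rcases hx with h|h|h|h <;> subst h <;> simp [-Prod.mk_zero_zero, -Prod.mk_one_one, T2, card0]
  · intro x hx y hy h
    simp only [Finset.coe_insert, cells0, Set.mem_insert_iff, Finset.coe_singleton,
      Set.mem_singleton_iff] at hx hy
    rcases hx with h1|h1|h1|h1 <;> rcases hy with h2|h2|h2|h2 <;> subst h1 <;> subst h2 <;>
      simp_all [-Prod.mk_zero_zero, -Prod.mk_one_one, T2]
  · intro v hv
    simp only [Set.mem_Iio, card0] at hv
    interval_cases v
    · exact ⟨(0,0), by simp [cells0], rfl⟩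
    · exact ⟨(1,0), by simp [cells0], rfl⟩
    · exact ⟨(0,1), by simp [cells0], rfl⟩
    · exact ⟨(1,1), by simp [cells0], rfl⟩
  · decide
  · decide
  · intro c hc
    rw [cells0] at hc
    simp only [Finset.mem_insert, Finset.mem_singleton, not_or] at hc
    obtain ⟨h1,h2,h3,h4⟩ := hc
    simp [-Prod.mk_zero_zero, -Prod.mk_one_one, T2, h1, h2, h3, h4]

lemma classify (T : ℕ × ℕ → ℕ) (h : IsSYT μ0 T) : T = T1 ∨ T = T2 := by
  obtain ⟨⟨hm, hi, -⟩, hrow, hcol, hz⟩ := h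
  have m00 : ((0,0) : ℕ × ℕ) ∈ μ0.cells := by rw [cells0]; decide
  have m01 : ((0,1) : ℕ × ℕ) ∈ μ0.cells := by rw [cells0]; decide
  have m10 : ((1,0) : ℕ × ℕ) ∈ μ0.cells := by rw [cells0]; decide
  have m11 : ((1,1) : ℕ × ℕ) ∈ μ0.cells := by rw [cells0]; decide
  have hb : T (0,1) < 4 := by
    have := hm (Finset.mem_coe.mpr m01); rwa [card0, Set.mem_Iio] at this
  have hc : T (1,0) < 4 := by
    have := hm (Finset.mem_coe.mpr m10); rwa [card0, Set.mem_Iio] at this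
  have hd : T (1,1) < 4 := by
    have := hm (Finset.mem_coe.mpr m11); rwa [card0, Set.mem_Iio] at this
  have hab : T (0,0) < T (0,1) := hrow _ m00 _ m01 rfl (by decide)
  have hac : T (0,0) < T (1,0) := hcol _ m00 _ m10 rfl (by decide)
  have hbd : T (0,1) < T (1,1) := hcol _ m01 _ m11 rfl (by decide)
  have hcd : T (1,0) < T (1,1) := hrow _ m10 _ m11 rfl (by decide)
  have hbc : T (0,1) ≠ T (1,0) := by
    intro he
    have := hi (Finset.mem_coe.mpr m01) (Finset.mem_coe.mpr m10) he
    simp at this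
  have key : (T (0,0) = 0 ∧ T (1,1) = 3) ∧
      ((T (0,1) = 1 ∧ T (1,0) = 2) ∨ (T (0,1) = 2 ∧ T (1,0) = 1)) := by omega
  obtain ⟨⟨ha0, hd3⟩, hbcv⟩ := key
  have houtside : ∀ x : ℕ × ℕ, x ∉ μ0.cells →
      x ≠ (0,0) ∧ x ≠ (0,1) ∧ x ≠ (1,0) ∧ x ≠ (1,1) := by
    intro x hx
    rw [cells0] at hx
    simpa [not_or] using hx
  rcases hbcv with ⟨hb1, hc2⟩ | ⟨hb2, hc1⟩
  · left
    funext x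
    by_cases hx : x ∈ μ0.cells
    · rw [cells0] at hx
      simp only [Finset.mem_insert, Finset.mem_singleton] at hx
      rcases hx with h|h|h|h <;> subst h <;> simp [-Prod.mk_zero_zero, -Prod.mk_one_one, T1, ha0, hb1, hc2, hd3]
    · obtain ⟨h1,h2,h3,h4⟩ := houtside x hx
      rw [hz x hx]; simp [-Prod.mk_zero_zero, -Prod.mk_one_one, T1, h1, h2, h3, h4]
  · right
    funext x
    by_cases hx : x ∈ μ0.cells
    · rw [cells0] at hx
      simp only [Finset.mem_insert, Finset.mem_singleton] at hx
      rcases hx with h|h|h|h <;> subst h <;> simp [-Prod.mk_zero_zero, -Prod.mk_one_one, T2, ha0, hb2, hc1, hd3]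
    · obtain ⟨h1,h2,h3,h4⟩ := houtside x hx
      rw [hz x hx]; simp [-Prod.mk_zero_zero, -Prod.mk_one_one, T2, h1, h2, h3, h4]


/-- The sequence of fake degrees `b_{λ,i}` is not always unimodal: there are a shape
`λ` and indices `i < j < k` with `b_{λ,i} > b_{λ,j}` and `b_{λ,j} < b_{λ,k}`. -/
theorem fakeDeg_not_unimodal :
    ∃ (μ : YoungDiagram) (i j k : ℕ), i < j ∧ j < k ∧
      fakeDeg μ j < fakeDeg μ i ∧ fakeDeg μ j < fakeDeg μ k := by
  refine ⟨μ0, 2, 3, 4, by norm_num, by norm_num, ?_⟩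
  have hset2 : {T : ℕ × ℕ → ℕ | IsSYT μ0 T ∧ majT μ0 T = 2} = {T1} := by
    ext T
    simp only [Set.mem_setOf_eq, Set.mem_singleton_iff]
    constructor
    · rintro ⟨hT, hmaj⟩
      rcases classify T hT with h | h
      · exact h
      · subst h; rw [maj2] at hmaj; omega
    · rintro rfl; exact ⟨isSYT1, maj1⟩
  have hset4 : {T : ℕ × ℕ → ℕ | IsSYT μ0 T ∧ majT μ0 T = 4} = {T2} := by
    ext T
    simp only [Set.mem_setOf_eq, Set.mem_singleton_iff]
    constructor
    · rintro ⟨hT, hmaj⟩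
      rcases classify T hT with h | h
      · subst h; rw [maj1] at hmaj; omega
      · exact h
    · rintro rfl; exact ⟨isSYT2, maj2⟩
  have hset3 : {T : ℕ × ℕ → ℕ | IsSYT μ0 T ∧ majT μ0 T = 3} = ∅ := by
    ext T
    simp only [Set.mem_setOf_eq, Set.mem_empty_iff_false, iff_false]
    rintro ⟨hT, hmaj⟩
    rcases classify T hT with h | h <;> subst h
    · rw [maj1] at hmaj; omega
    · rw [maj2] at hmaj; omega
  constructor
  · rw [fakeDeg, fakeDeg, hset2, hset3]
    simp [Set.ncard_singleton]
  · rw [fakeDeg, fakeDeg, hset4, hset3]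
    simp [Set.ncard_singleton]
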